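/- Let m be a positive odd integer and let f be an automorphism of a cyclotomic field containing Q(ζ_m, i, √m). Let r be an integer coprime to m with f(ζ_m) = ζ_m^r, and let ε(i,f) ∈ {±1} be defined by f(i) = ε(i,f)·i. Then f(√m) = ε(i,f)^{(m−1)/2} · (r/m) · √m, where (r/m) is the Jacobi symbol. -/
import Mathlib

open MulChar AddChar

/-- If `ε = ±1` then `ε^a` only depends on the parity of `a`. -/
lemma stmt7_eps_pow_parity {K : Type*} [Field K] {ε : ℤ} (hε : ε = 1 ∨ ε = -1)
    {a b : ℕ} (h : a % 2 = b % 2) : (ε : K) ^ a = (ε : K) ^ b := by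
  rcases hε with h1 | h1
  · simp [h1]
  · subst h1
    push_cast
    rcases Nat.even_or_odd a with ha | ha
    · rw [Nat.even_iff] at ha
      rw [(Nat.even_iff.mpr ha).neg_one_pow, (Nat.even_iff.mpr (by omega)).neg_one_pow]
    · rw [Nat.odd_iff] at ha
      rw [(Nat.odd_iff.mpr ha).neg_one_pow, (Nat.odd_iff.mpr (by omega)).neg_one_pow]

/-- The key prime step: via the Gauss sum one produces a square root `s` of `p`
on which `f` acts by `ε^((p-1)/2) * (legendreSym p r)`. -/
lemma stmt7_prime_step {K : Type*} [Field K] [CharZero K]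
    (p : ℕ) [hpf : Fact p.Prime] (hp2 : p ≠ 2)
    (ζp im : K) (hζp : IsPrimitiveRoot ζp p) (him : im ^ 2 = -1)
    (f : K →+* K) (r : ℤ) (hrp : ¬ (p : ℤ) ∣ r)
    (hfζ : f ζp = ζp ^ r) (ε : ℤ) (hε : ε = 1 ∨ ε = -1)
    (hfi : f im = (ε : K) * im) :
    ∃ s : K, s ^ 2 = p ∧
      f s = (ε : K) ^ ((p - 1) / 2) * (legendreSym p r : K) * s := by
  have hp := hpf.out
  haveI : NeZero p := ⟨hp.pos.ne'⟩
  have hζpne : ζp ≠ 0 := fun h => by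
    simpa [h, zero_pow hp.pos.ne'] using hζp.pow_eq_one
  have hringchar : ringChar (ZMod p) ≠ 2 := by
    rw [ZMod.ringChar_zmod_n]; exact hp2
  set ψ : AddChar (ZMod p) K := AddChar.zmodChar p hζp.pow_eq_one with hψdef
  set χ : MulChar (ZMod p) K :=
    (quadraticChar (ZMod p)).ringHomComp (Int.castRingHom K) with hχdef
  have hψ : ψ.IsPrimitive := AddChar.zmodChar_primitive_of_primitive_root p hζp
  have hχ1 : χ ≠ 1 :=
    (ringHomComp_ne_one_iff Int.cast_injective).mpr (quadraticChar_ne_one hringchar)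
  have hχq : χ.IsQuadratic := (quadraticChar_isQuadratic (ZMod p)).comp _
  set e := (p - 1) / 2 with he
  set g := gaussSum χ ψ with hgdef
  have hpodd : p % 2 = 1 := Nat.odd_iff.mp (hp.odd_of_ne_two hp2)
  have hg2 : g ^ 2 = (-1 : K) ^ e * p := by
    rw [hgdef, gaussSum_sq hχ1 hχq hψ]
    have h4 : quadraticChar (ZMod p) (-1) = (-1) ^ (p / 2) := by
      rw [quadraticChar_neg_one hringchar, ZMod.card,
        ZMod.χ₄_eq_neg_one_pow hpodd]
    have hcard : (Fintype.card (ZMod p) : K) = p := by rw [ZMod.card]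
    have hpe : p / 2 = e := by omega
    rw [hχdef, MulChar.ringHomComp_apply, h4, hcard, hpe]
    simp only [map_pow, map_neg, map_one]
  -- the action of f on the additive character
  have hzpow : ∀ a b : ℤ, a ≡ b [ZMOD (p : ℤ)] → ζp ^ a = ζp ^ b := by
    intro a b hab
    obtain ⟨c, hc⟩ := Int.ModEq.dvd hab
    rw [show b = a + (p : ℤ) * c from by linarith, zpow_add₀ hζpne, zpow_mul,
      zpow_natCast, hζp.pow_eq_one, one_zpow, mul_one]
  have key : ∀ x : ZMod p, f (ψ x) = ψ ((r : ZMod p) * x) := by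
    intro x
    rw [hψdef, AddChar.zmodChar_apply, AddChar.zmodChar_apply, map_pow, hfζ,
      ← zpow_natCast (ζp ^ r), ← zpow_mul]
    rw [← zpow_natCast ζp (((r : ZMod p) * x).val)]
    apply hzpow
    have h1 : ((r * (x.val : ℤ) : ℤ) : ZMod p)
        = (((((r : ZMod p) * x).val : ℤ)) : ZMod p) := by
      push_cast
      simp [ZMod.natCast_val, ZMod.cast_id]
    exact (ZMod.intCast_eq_intCast_iff _ _ _).mp h1
  -- (r : ZMod p) is a unit
  have hr0 : (r : ZMod p) ≠ 0 := by
    intro h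
    exact hrp ((ZMod.intCast_zmod_eq_zero_iff_dvd r p).mp h)
  have hru : IsUnit (r : ZMod p) := isUnit_iff_ne_zero.mpr hr0
  set u : (ZMod p)ˣ := hru.unit with hu
  have huc : (u : ZMod p) = (r : ZMod p) := hru.unit_spec
  -- action of f on the Gauss sum
  have hfg' : f g = gaussSum χ (ψ.mulShift u) := by
    rw [hgdef, gaussSum, map_sum, gaussSum]
    refine Finset.sum_congr rfl fun x _ => ?_
    rw [map_mul, key x, AddChar.mulShift_apply, huc]
    congr 1
    exact map_intCast f _
  have hshift := gaussSum_mulShift χ ψ u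
  have hχu : χ (u : ZMod p) = ((legendreSym p r : ℤ) : K) := by
    rw [huc]
    rfl
  have hL : legendreSym p r = 1 ∨ legendreSym p r = -1 :=
    legendreSym.eq_one_or_neg_one p hr0
  have hfg : f g = ((legendreSym p r : ℤ) : K) * g := by
    rw [hfg']
    rcases hL with h1 | h1
    · rw [hgdef, ← hshift, hχu, h1] ; push_cast ; ring
    · rw [hgdef, ← hshift, hχu, h1] ; push_cast ; ring
  refine ⟨g * im ^ e, ?_, ?_⟩
  · have him2 : (im ^ e) ^ 2 = (-1 : K) ^ e := by
      rw [← pow_mul, mul_comm e 2, pow_mul, him]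
    have : (g * im ^ e) ^ 2 = g ^ 2 * (im ^ e) ^ 2 := by ring
    rw [this, hg2, him2]
    have : ((-1 : K) ^ e) * ((-1 : K) ^ e) = 1 := by
      rw [← pow_add]
      exact Even.neg_one_pow ⟨e, rfl⟩
    calc (-1 : K) ^ e * (p : K) * (-1 : K) ^ e
        = ((-1 : K) ^ e * (-1 : K) ^ e) * p := by ring
      _ = p := by rw [this, one_mul]
  · rw [map_mul, map_pow, hfi, hfg, mul_pow]
    ring

/-- Combined step: for every divisor `d` of `m` there is a square root of `d`
on which `f` acts by `ε^((d-1)/2) * (r/d)` (Jacobi symbol). -/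
lemma stmt7_combined {K : Type*} [Field K] [CharZero K]
    (m : ℕ) (hm : Odd m) (ζ im : K) (hζ : IsPrimitiveRoot ζ m) (him : im ^ 2 = -1)
    (f : K →+* K) (r : ℤ) (hr : IsCoprime r (m : ℤ)) (hfζ : f ζ = ζ ^ r)
    (ε : ℤ) (hε : ε = 1 ∨ ε = -1) (hfi : f im = (ε : K) * im) :
    ∀ d : ℕ, d ∣ m →
      ∃ t : K, t ^ 2 = d ∧
        f t = (ε : K) ^ ((d - 1) / 2) * (jacobiSym r d : K) * t := by
  have hm0 : m ≠ 0 := by rintro rfl; simpa using hm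
  intro d
  induction d using Nat.strong_induction_on with
  | _ d ih =>
  intro hdm
  rcases eq_or_ne d 1 with rfl | hd1
  · exact ⟨1, by simp, by simp [jacobiSym.one_right]⟩
  have hd0 : d ≠ 0 := by rintro rfl; exact hm0 (Nat.zero_dvd.mp hdm)
  obtain ⟨p, hpdef⟩ : ∃ p, p = d.minFac := ⟨_, rfl⟩
  have hp : p.Prime := hpdef ▸ Nat.minFac_prime hd1
  have hpd : p ∣ d := hpdef ▸ Nat.minFac_dvd d
  obtain ⟨k, hkdef⟩ : ∃ k, k = d / p := ⟨_, rfl⟩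
  have hdk : d = p * k := by rw [hkdef]; exact (Nat.mul_div_cancel' hpd).symm
  have hklt : k < d := hkdef ▸ Nat.div_lt_self (Nat.pos_of_ne_zero hd0) hp.one_lt
  have hkd : k ∣ d := ⟨p, by rw [hdk]; ring⟩
  have hkm : k ∣ m := hkd.trans hdm
  obtain ⟨t, ht2, htf⟩ := ih k hklt hkm
  have hodd_dvd : ∀ a : ℕ, a ∣ m → Odd a := by
    intro a hab
    rcases Nat.even_or_odd a with he | ho
    · exact absurd (even_iff_two_dvd.mpr ((even_iff_two_dvd.mp he).trans hab))
        (Nat.not_even_iff_odd.mpr hm)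
    · exact ho
  have hd_odd : Odd d := hodd_dvd d hdm
  have hp_odd : Odd p := hodd_dvd p (hpd.trans hdm)
  have hk_odd : Odd k := hodd_dvd k hkm
  have hp2 : p ≠ 2 := by
    intro h; rw [h] at hp_odd; exact (Nat.not_odd_iff_even.mpr even_two) hp_odd
  have hpm : p ∣ m := hpd.trans hdm
  have hmp : m = (m / p) * p := (Nat.div_mul_cancel hpm).symm
  have hζp : IsPrimitiveRoot (ζ ^ (m / p)) p := hζ.pow (Nat.pos_of_ne_zero hm0) hmp
  have hfζp : f (ζ ^ (m / p)) = (ζ ^ (m / p)) ^ (r : ℤ) := by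
    rw [map_pow, hfζ, ← zpow_natCast (ζ ^ r), ← zpow_mul, mul_comm,
      zpow_mul, zpow_natCast]
  have hrp : ¬ (p : ℤ) ∣ r := by
    intro hdvd
    have hu : IsUnit (p : ℤ) :=
      hr.isUnit_of_dvd' hdvd (Int.natCast_dvd_natCast.mpr hpm)
    have h2 := hp.two_le
    rcases Int.isUnit_iff.mp hu with h | h <;> omega
  haveI : Fact p.Prime := ⟨hp⟩
  obtain ⟨s, hs2, hsf⟩ :=
    stmt7_prime_step p hp2 (ζ ^ (m / p)) im hζp him f r hrp hfζp ε hε hfi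
  refine ⟨s * t, ?_, ?_⟩
  · rw [mul_pow, hs2, ht2, hdk]
    push_cast
    ring
  · rw [map_mul, hsf, htf]
    haveI : NeZero p := ⟨hp.pos.ne'⟩
    haveI : NeZero k := ⟨by rintro h; rw [h, mul_zero] at hdk; exact hd0 hdk⟩
    have hJ : (jacobiSym r d : ℤ) = legendreSym p r * jacobiSym r k := by
      rw [hdk, jacobiSym.mul_right, jacobiSym.legendreSym.to_jacobiSym]
    have hpar : ((p - 1) / 2 + (k - 1) / 2) % 2 = ((d - 1) / 2) % 2 := by
      obtain ⟨a, ha⟩ := hp_odd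
      obtain ⟨b, hb⟩ := hk_odd
      obtain ⟨c, hc⟩ : ∃ c, c = a * b := ⟨_, rfl⟩
      have hd' : d = 2 * (2 * c + a + b) + 1 := by rw [hdk, ha, hb, hc]; ring
      omega
    have hε2 : (ε : K) ^ ((p - 1) / 2 + (k - 1) / 2) = (ε : K) ^ ((d - 1) / 2) :=
      stmt7_eps_pow_parity hε hpar
    rw [hJ]
    push_cast
    rw [← hε2, pow_add]
    ring

/-- Action of a Galois automorphism on `√m` for odd `m`: if `f ζ_m = ζ_m^r`
and `f i = ε·i`, then `f √m = ε^{(m−1)/2} (r/m) √m`, where `(r/m)` is the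
Jacobi symbol. Here the cyclotomic field is pinned down inside `ℂ` by the
embedding `emb`. -/
theorem stmt_7 (m : ℕ) (hm : Odd m) (hmpos : 0 < m) (n : ℕ+)
    (ζ im sm : CyclotomicField n ℚ)
    (hζ : IsPrimitiveRoot ζ m) (him : im ^ 2 = -1) (hsm : sm ^ 2 = (m : CyclotomicField n ℚ))
    (emb : CyclotomicField n ℚ →+* ℂ)
    (hembζ : emb ζ = Complex.exp (2 * Real.pi * Complex.I / m))
    (hembi : emb im = Complex.I)
    (hembs : emb sm = (Real.sqrt m : ℂ))
    (f : CyclotomicField n ℚ ≃ₐ[ℚ] CyclotomicField n ℚ)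
    (r : ℤ) (hr : IsCoprime r (m : ℤ)) (hfζ : f ζ = ζ ^ r)
    (ε : ℤ) (hεpm : ε = 1 ∨ ε = -1) (hfi : f im = (ε : CyclotomicField n ℚ) * im) :
    f sm = (ε : CyclotomicField n ℚ) ^ ((m - 1) / 2) *
      (jacobiSym r m : CyclotomicField n ℚ) * sm := by
  haveI : CharZero (CyclotomicField n ℚ) :=
    charZero_of_injective_algebraMap (algebraMap ℚ (CyclotomicField n ℚ)).injective
  set F : CyclotomicField n ℚ →+* CyclotomicField n ℚ :=
    ((f : CyclotomicField n ℚ ≃+* CyclotomicField n ℚ) :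
      CyclotomicField n ℚ →+* CyclotomicField n ℚ) with hFdef
  have hFeq : ∀ x, F x = f x := fun x => rfl
  obtain ⟨t, ht2, htf⟩ :=
    stmt7_combined m hm ζ im hζ him F r hr (by rw [hFeq, hfζ]) ε hεpm
      (by rw [hFeq, hfi]) m dvd_rfl
  have hsq : (sm - t) * (sm + t) = 0 := by
    have h0 : sm ^ 2 - t ^ 2 = 0 := by rw [hsm, ht2]; ring
    calc (sm - t) * (sm + t) = sm ^ 2 - t ^ 2 := by ring
      _ = 0 := h0
  rw [← hFeq]
  rcases mul_eq_zero.mp hsq with h | h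
  · have hst : sm = t := by linear_combination h
    rw [hst]; exact htf
  · have hst : sm = -t := by linear_combination h
    rw [hst, map_neg, htf]
    ring
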